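/- For every $q^0 \in [0,\infty)^V$, the complete-graph initial value problem has at most one solution: if $\bar q$ and $\tilde q$ are two solutions with the same initial condition $q^0$, then $\bar q(t) = \tilde q(t)$ for all $t \ge 0$. -/

import Mathlib

open Finset

/-- The fluid drift of QB-CSMA on a complete interference graph:
`g_v(q) = λ_v - q_v^a / ∑_w q_w^a`. -/
noncomputable def gdrift {V : Type*} [Fintype V] (a : ℝ) (lam : V → ℝ) (q : V → ℝ) :
    V → ℝ :=
  fun v => lam v - q v ^ a / ∑ w, q w ^ a

/-- A solution of the complete-graph initial value problem with initial condition `q⁰`: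
a continuous `f : [0,∞) → [0,∞)^V` with `f(0) = q⁰`, whose sum of coordinates is
`max(s(q⁰) + (s(λ)-1) t, 0)`, and which satisfies `f'(t) = g(f(t))` at every `t > 0`
with `f(t) ≠ 0`. -/
def IsCGSolution {V : Type*} [Fintype V] (a : ℝ) (lam : V → ℝ) (q0 : V → ℝ)
    (f : ℝ → V → ℝ) : Prop :=
  ContinuousOn f (Set.Ici 0) ∧ f 0 = q0 ∧
    (∀ t, 0 ≤ t → ∀ v, 0 ≤ f t v) ∧
    (∀ t, 0 ≤ t → ∑ v, f t v = max ((∑ v, q0 v) + ((∑ v, lam v) - 1) * t) 0) ∧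
    (∀ t, 0 < t → f t ≠ 0 → HasDerivAt f (gdrift a lam (f t)) t)

section CGaux

variable {V : Type*} [Fintype V] [Nonempty V]

lemma cg_coord_deriv {f : ℝ → V → ℝ} {g : V → ℝ} {t : ℝ} (v : V)
    (hf : HasDerivAt f g t) : HasDerivAt (fun s => f s v) (g v) t :=
  (ContinuousLinearMap.proj (R := ℝ) (φ := fun _ : V => ℝ) v).hasFDerivAt.comp_hasDerivAt t hf

lemma cg_rpow_lip {a m M x y : ℝ} (ha : 0 < a) (hm : 0 < m)
    (hx : x ∈ Set.Icc m M) (hy : y ∈ Set.Icc m M) :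
    |y ^ a - x ^ a| ≤ (a * (m ^ (a-1) + M ^ (a-1))) * |y - x| := by
  have key := Convex.norm_image_sub_le_of_norm_hasDerivWithin_le
    (f := fun z : ℝ => z ^ a) (f' := fun z => a * z ^ (a-1)) (s := Set.Icc m M)
    (C := a * (m ^ (a-1) + M ^ (a-1)))
    (fun z hz => (Real.hasDerivAt_rpow_const
      (Or.inl (ne_of_gt (lt_of_lt_of_le hm hz.1)))).hasDerivWithinAt)
    ?_ (convex_Icc m M) hx hy
  · simpa [Real.norm_eq_abs] using key
  · intro z hz
    have hz0 : 0 < z := lt_of_lt_of_le hm hz.1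
    have hM : 0 < M := lt_of_lt_of_le hz0 hz.2
    rw [Real.norm_eq_abs, abs_mul, abs_of_pos ha, abs_of_pos (Real.rpow_pos_of_pos hz0 _)]
    have hzb : z ^ (a-1) ≤ m ^ (a-1) + M ^ (a-1) := by
      rcases le_or_gt a 1 with h1 | h1
      · have : z ^ (a-1) ≤ m ^ (a-1) := Real.rpow_le_rpow_of_nonpos hm hz.1 (by linarith)
        nlinarith [Real.rpow_nonneg hM.le (a-1)]
      · have : z ^ (a-1) ≤ M ^ (a-1) := Real.rpow_le_rpow hz0.le hz.2 (by linarith)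
        nlinarith [Real.rpow_nonneg hm.le (a-1)]
    nlinarith [Real.rpow_pos_of_pos hz0 (a-1)]

/-- the affine function `L s = s0 + (sλ - 1) s` satisfies `(L T / T) * s ≤ L s` on `[0,T]`
when `s0 ≥ 0`. -/
lemma cg_affine_lower {s0 m T s : ℝ} (hs0 : 0 ≤ s0) (hT : 0 < T)
    (h0 : 0 ≤ s) (hsT : s ≤ T) : ((s0 + m * T) / T) * s ≤ s0 + m * s := by
  rw [div_mul_eq_mul_div, div_le_iff₀ hT]
  nlinarith

/-- coordinates are at most the total sum. -/
lemma cg_coord_le_sum {f : V → ℝ} (hf : ∀ v, 0 ≤ f v) (v : V) : f v ≤ ∑ w, f w :=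
  Finset.single_le_sum (fun w _ => hf w) (Finset.mem_univ v)

/-- some coordinate is at least the average; hence `∑ q^a ≥ (L/n)^a`. -/
lemma cg_S_lower {a : ℝ} (ha : 0 < a) {f : V → ℝ} (hf : ∀ v, 0 ≤ f v) {L : ℝ}
    (hsum : ∑ v, f v = L) :
    (L / (Fintype.card V : ℝ)) ^ a ≤ ∑ v, f v ^ a := by
  have hn : 0 < (Fintype.card V : ℝ) := by
    exact_mod_cast Fintype.card_pos
  have hL : 0 ≤ L := hsum ▸ Finset.sum_nonneg (fun v _ => hf v)
  obtain ⟨w, hw⟩ : ∃ w : V, L / (Fintype.card V : ℝ) ≤ f w := by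
    by_contra hcon
    push_neg at hcon
    have := Finset.sum_lt_sum_of_nonempty (s := (Finset.univ : Finset V))
      Finset.univ_nonempty (f := f) (g := fun _ => L / (Fintype.card V : ℝ))
      (fun w _ => hcon w)
    rw [hsum, Finset.sum_const, Finset.card_univ, nsmul_eq_mul,
      mul_div_cancel₀ _ hn.ne'] at this
    exact lt_irrefl _ this
  calc (L / (Fintype.card V : ℝ)) ^ a ≤ f w ^ a :=
        Real.rpow_le_rpow (by positivity) hw ha.le
  _ ≤ ∑ v, f v ^ a :=
        Finset.single_le_sum (fun v _ => Real.rpow_nonneg (hf v) a) (Finset.mem_univ w)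

end CGaux


lemma hasDerivAt_reluSq (x : ℝ) :
    HasDerivAt (fun y : ℝ => max y 0 * max y 0) (2 * max x 0) x := by
  rcases lt_trichotomy x 0 with h | h | h
  · have hev : (fun y : ℝ => max y 0 * max y 0) =ᶠ[nhds x] fun _ => (0:ℝ) := by
      filter_upwards [Iio_mem_nhds h] with y hy
      simp [max_eq_right (le_of_lt (Set.mem_Iio.1 hy))]
    have : HasDerivAt (fun _ : ℝ => (0:ℝ)) 0 x := hasDerivAt_const x 0
    simpa [max_eq_right h.le] using this.congr_of_eventuallyEq hev
  · subst h
    rw [hasDerivAt_iff_isLittleO]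
    rw [Asymptotics.isLittleO_iff]
    intro c hc
    filter_upwards [Metric.ball_mem_nhds (0:ℝ) hc] with y hy
    rw [Real.ball_eq_Ioo] at hy
    have h1 : |y| < c := by
      rw [abs_lt]; constructor <;> [linarith [hy.1]; linarith [hy.2]]
    have h2 : |max y 0| ≤ |y| := by
      rcases le_total y 0 with h' | h'
      · rw [max_eq_right h', abs_of_nonpos h']; simpa using h'
      · rw [max_eq_left h']
    simp only [max_self, mul_zero, sub_zero, smul_eq_mul, zero_mul]
    calc ‖max y 0 * max y 0‖ = |max y 0| * |max y 0| := by rw [Real.norm_eq_abs, abs_mul]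
    _ ≤ |y| * |y| := mul_le_mul h2 h2 (abs_nonneg _) (abs_nonneg _)
    _ ≤ c * ‖y‖ := by rw [Real.norm_eq_abs]; nlinarith [abs_nonneg y]
  · have hev : (fun y : ℝ => max y 0 * max y 0) =ᶠ[nhds x] fun y => y * y := by
      filter_upwards [Ioi_mem_nhds h] with y hy
      simp [max_eq_left (le_of_lt (Set.mem_Ioi.1 hy))]
    have : HasDerivAt (fun y : ℝ => y * y) (2 * x) x := by
      simpa [two_mul] using (hasDerivAt_id x).fun_mul (hasDerivAt_id x)
    simpa [max_eq_left h.le] using this.congr_of_eventuallyEq hev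


section CGlower

variable {V : Type*} [Fintype V] [Nonempty V]

set_option maxHeartbeats 1000000 in
/-- Lemma A: any solution satisfies the linear lower bound `f_v(t) ≥ ρ t` on `[0,T]`,
provided the total mass stays positive up to time `T`. -/
lemma cg_lower_bound {a : ℝ} (ha : 0 < a) {lam q0 : V → ℝ}
    (hlam : ∀ v, 0 < lam v) (hq0 : ∀ v, 0 ≤ q0 v)
    {f : ℝ → V → ℝ} (hf : IsCGSolution a lam q0 f) {T : ℝ} (hT : 0 < T)
    (hLT : 0 < (∑ v, q0 v) + ((∑ v, lam v) - 1) * T) :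
    ∃ ρ : ℝ, 0 < ρ ∧ ∀ t ∈ Set.Icc (0:ℝ) T, ∀ v, ρ * t ≤ f t v := by
  obtain ⟨hcont, hinit, hpos, hsum, hode⟩ := hf
  set s0 := ∑ v, q0 v with hs0def
  set sm := (∑ v, lam v) - 1 with hsmdef
  have hs0 : 0 ≤ s0 := Finset.sum_nonneg (fun v _ => hq0 v)
  set n : ℝ := (Fintype.card V : ℝ) with hndef
  have hn : 0 < n := by rw [hndef]; exact_mod_cast Fintype.card_pos
  set κ : ℝ := (s0 + sm * T) / T with hκdef
  have hκ : 0 < κ := div_pos hLT hT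
  obtain ⟨lm, hlmpos, hlmle⟩ : ∃ lm : ℝ, 0 < lm ∧ ∀ v, lm ≤ lam v := by
    obtain ⟨v0, -, hv0⟩ := Finset.exists_min_image Finset.univ lam
      ⟨Classical.arbitrary V, Finset.mem_univ _⟩
    exact ⟨lam v0, hlam v0, fun v => hv0 v (Finset.mem_univ v)⟩
  set ρ : ℝ := min (lm/2) ((lm/2) ^ (a⁻¹) * (κ/n) / 2) with hρdef
  have hρpos : 0 < ρ := by
    apply lt_min (by linarith)
    have := Real.rpow_pos_of_pos (show 0 < lm/2 by linarith) (a⁻¹)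
    positivity
  have hρlm : ρ ≤ lm/2 := min_le_left _ _
  have hρa : (2*ρ) ^ a ≤ (lm/2) * (κ/n) ^ a := by
    have h2ρ : 2*ρ ≤ (lm/2) ^ (a⁻¹) * (κ/n) := by
      have := min_le_right (lm/2) ((lm/2) ^ (a⁻¹) * (κ/n) / 2)
      linarith
    have hb : (0:ℝ) ≤ (lm/2) ^ (a⁻¹) * (κ/n) := by
      have := Real.rpow_nonneg (show (0:ℝ) ≤ lm/2 by linarith) (a⁻¹)
      positivity
    calc (2*ρ) ^ a ≤ ((lm/2) ^ (a⁻¹) * (κ/n)) ^ a :=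
          Real.rpow_le_rpow (by positivity) h2ρ ha.le
    _ = ((lm/2) ^ (a⁻¹)) ^ a * (κ/n) ^ a :=
          Real.mul_rpow (Real.rpow_nonneg (by linarith) _) (by positivity)
    _ = (lm/2) * (κ/n) ^ a := by
          rw [← Real.rpow_mul (by linarith : (0:ℝ) ≤ lm/2), inv_mul_cancel₀ ha.ne',
            Real.rpow_one]
  have hLlow : ∀ s ∈ Set.Icc (0:ℝ) T, κ * s ≤ s0 + sm * s := by
    intro s hs
    exact cg_affine_lower hs0 hT hs.1 hs.2
  have hLpos : ∀ s ∈ Set.Ioc (0:ℝ) T, 0 < s0 + sm * s := by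
    intro s hs
    exact lt_of_lt_of_le (mul_pos hκ hs.1) (hLlow s ⟨hs.1.le, hs.2⟩)
  have hsum' : ∀ s ∈ Set.Ioc (0:ℝ) T, ∑ v, f s v = s0 + sm * s := by
    intro s hs
    rw [hsum s hs.1.le]
    exact max_eq_left (hLpos s hs).le
  have hfne : ∀ s ∈ Set.Ioc (0:ℝ) T, f s ≠ 0 := by
    intro s hs heq
    have := hsum' s hs
    rw [heq] at this
    simp only [Pi.zero_apply, Finset.sum_const_zero] at this
    exact absurd this.symm (ne_of_gt (hLpos s hs))
  have hdrift : ∀ s ∈ Set.Ioc (0:ℝ) T, ∀ v, f s v ≤ 2*ρ*s →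
      ρ ≤ gdrift a lam (f s) v := by
    intro s hs v hfv
    set S := ∑ w, f s w ^ a with hSdef
    have hSlow : ((s0 + sm * s)/n) ^ a ≤ S :=
      cg_S_lower ha (fun w => hpos s hs.1.le w) (hsum' s hs)
    have hLs := hLpos s hs
    have hSpos : 0 < S :=
      lt_of_lt_of_le (Real.rpow_pos_of_pos (by positivity) a) hSlow
    have h1 : f s v ^ a ≤ (lm/2) * S := by
      have c1 : f s v ^ a ≤ (2*ρ*s) ^ a :=
        Real.rpow_le_rpow (hpos s hs.1.le v) hfv ha.le
      have c2 : (2*ρ*s) ^ a = (2*ρ) ^ a * s ^ a :=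
        Real.mul_rpow (by positivity) hs.1.le
      have c3 : (2*ρ) ^ a * s ^ a ≤ ((lm/2) * (κ/n) ^ a) * s ^ a :=
        mul_le_mul_of_nonneg_right hρa (Real.rpow_nonneg hs.1.le a)
      have c4 : ((lm/2) * (κ/n) ^ a) * s ^ a = (lm/2) * ((κ*s)/n) ^ a := by
        rw [mul_assoc, ← Real.mul_rpow (by positivity) hs.1.le]
        congr 2
        ring
      have c5 : (lm/2) * ((κ*s)/n) ^ a ≤ (lm/2) * ((s0 + sm*s)/n) ^ a := by
        have h1 : (κ*s)/n ≤ (s0+sm*s)/n := by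
          gcongr
          exact hLlow s ⟨hs.1.le, hs.2⟩
        exact mul_le_mul_of_nonneg_left
          (Real.rpow_le_rpow (le_of_lt (div_pos (mul_pos hκ hs.1) hn)) h1 ha.le)
          (by linarith)
      have c6 : (lm/2) * ((s0 + sm*s)/n) ^ a ≤ (lm/2) * S :=
        mul_le_mul_of_nonneg_left hSlow (by linarith)
      linarith
    have hratio : f s v ^ a / S ≤ lm/2 := (div_le_iff₀ hSpos).2 h1
    have hgd : gdrift a lam (f s) v = lam v - f s v ^ a / S := rfl
    rw [hgd]
    have := hlmle v
    linarith
  refine ⟨ρ, hρpos, ?_⟩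
  intro t ht v
  by_contra hcon
  push_neg at hcon
  have htpos : 0 < t := by
    rcases eq_or_lt_of_le ht.1 with h | h
    · exfalso
      have := hpos 0 le_rfl v
      rw [← h] at hcon
      simp at hcon
      linarith
    · exact h
  have hcv : ContinuousOn (fun s => f s v) (Set.Ici (0:ℝ)) :=
    (continuous_apply v).comp_continuousOn hcont
  set G := {s : ℝ | s ∈ Set.Icc 0 t ∧ 2*ρ*s ≤ f s v} with hGdef
  have hG0 : (0:ℝ) ∈ G := by
    constructor
    · exact ⟨le_rfl, htpos.le⟩
    · simpa using hpos 0 le_rfl v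
  have hGclosed : IsClosed G := by
    have : G = Set.Icc 0 t ∩ (fun s => f s v - 2*ρ*s) ⁻¹' (Set.Ici 0) := by
      ext s
      simp only [hGdef, Set.mem_setOf_eq, Set.mem_inter_iff, Set.mem_preimage,
        Set.mem_Ici, sub_nonneg]
    rw [this]
    apply ContinuousOn.preimage_isClosed_of_isClosed _ isClosed_Icc isClosed_Ici
    exact ((hcv.mono (Set.Icc_subset_Ici_self)).sub
      ((continuous_const.mul continuous_id).continuousOn))
  have hGbdd : BddAbove G := ⟨t, fun s hs => hs.1.2⟩
  set σ0 := sSup G with hσ0def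
  have hσ0G : σ0 ∈ G := hGclosed.csSup_mem ⟨0, hG0⟩ hGbdd
  have hσ0mem : σ0 ∈ Set.Icc (0:ℝ) t := hσ0G.1
  have hσ0f : 2*ρ*σ0 ≤ f σ0 v := hσ0G.2
  have hσ0lt : σ0 < t := by
    rcases eq_or_lt_of_le hσ0mem.2 with h | h
    · exfalso
      rw [h] at hσ0f
      nlinarith
    · exact h
  have hlt2 : ∀ s, σ0 < s → s ≤ t → f s v < 2*ρ*s := by
    intro s h1 h2
    by_contra hc
    push_neg at hc
    have : s ∈ G := ⟨⟨le_trans hσ0mem.1 h1.le, h2⟩, hc⟩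
    exact absurd (le_csSup hGbdd this) (not_le.2 h1)
  have hFder : ∀ s ∈ Set.Ioo σ0 t,
      HasDerivAt (fun u => f u v - ρ*u) (gdrift a lam (f s) v - ρ) s := by
    intro s hs
    have hspos : 0 < s := lt_of_le_of_lt hσ0mem.1 hs.1
    have hsIoc : s ∈ Set.Ioc (0:ℝ) T := ⟨hspos, le_trans hs.2.le ht.2⟩
    have hder : HasDerivAt (fun u => f u v) (gdrift a lam (f s) v) s :=
      cg_coord_deriv v (hode s hspos (hfne s hsIoc))
    simpa using hder.fun_sub ((hasDerivAt_id s).const_mul ρ)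
  have hmono : MonotoneOn (fun u => f u v - ρ*u) (Set.Icc σ0 t) := by
    apply monotoneOn_of_deriv_nonneg (convex_Icc σ0 t)
    · refine ((hcv.mono ?_).sub
        ((continuous_const.mul continuous_id).continuousOn))
      intro s hs
      exact le_trans hσ0mem.1 hs.1
    · rw [interior_Icc]
      intro s hs
      exact (hFder s hs).differentiableAt.differentiableWithinAt
    · rw [interior_Icc]
      intro s hs
      rw [(hFder s hs).deriv]
      have hspos : 0 < s := lt_of_le_of_lt hσ0mem.1 hs.1
      have hsIoc : s ∈ Set.Ioc (0:ℝ) T := ⟨hspos, le_trans hs.2.le ht.2⟩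
      have hle : f s v ≤ 2*ρ*s := (hlt2 s hs.1 hs.2.le).le
      have := hdrift s hsIoc v hle
      linarith
  have h1 := hmono (Set.left_mem_Icc.2 hσ0lt.le) (Set.right_mem_Icc.2 hσ0lt.le) hσ0lt.le
  simp only at h1
  have hσ0nn : 0 ≤ σ0 := hσ0mem.1
  nlinarith

end CGlower

section CGcompare

variable {V : Type*} [Fintype V] [Nonempty V]

set_option maxHeartbeats 2000000 in
/-- Lemma B: time-shifted comparison between two solutions via a singular Gronwall
argument. -/
lemma cg_compare {a : ℝ} (ha : 0 < a) {lam q0 : V → ℝ}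
    (hlam : ∀ v, 0 < lam v) (hq0 : ∀ v, 0 ≤ q0 v)
    {f1 f2 : ℝ → V → ℝ} (hf1 : IsCGSolution a lam q0 f1) (hf2 : IsCGSolution a lam q0 f2)
    {h T σ : ℝ} (hh : 0 ≤ h) (hT : 0 < T) (hσ : 0 < σ)
    (hLT : 0 < (∑ v, q0 v) + ((∑ v, lam v) - 1) * (T + h))
    (hσle : ∀ t ∈ Set.Icc (0:ℝ) T, σ ≤ (∑ v, q0 v) + ((∑ v, lam v) - 1) * (t + h))
    (hinit : ∀ v, q0 v ≤ f2 h v) :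
    ∀ t ∈ Set.Icc (0:ℝ) T, ∀ v, f1 t v ≤ f2 (t+h) v := by
  obtain ⟨hcont1, hinit1, hpos1, hsum1, hode1⟩ := hf1
  obtain ⟨hcont2, hinit2, hpos2, hsum2, hode2⟩ := hf2
  set s0 := ∑ v, q0 v with hs0def
  set sm := (∑ v, lam v) - 1 with hsmdef
  have hs0 : 0 ≤ s0 := Finset.sum_nonneg (fun v _ => hq0 v)
  set n : ℝ := (Fintype.card V : ℝ) with hndef
  have hn : 0 < n := by rw [hndef]; exact_mod_cast Fintype.card_pos
  have hTh : 0 < T + h := by linarith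
  set κ : ℝ := (s0 + sm * (T+h)) / (T+h) with hκdef
  have hκ : 0 < κ := div_pos hLT hTh
  have hLlow : ∀ s ∈ Set.Icc (0:ℝ) (T+h), κ * s ≤ s0 + sm * s := by
    intro s hs
    exact cg_affine_lower hs0 hTh hs.1 hs.2
  have hLposIoc : ∀ s ∈ Set.Ioc (0:ℝ) (T+h), 0 < s0 + sm * s := by
    intro s hs
    exact lt_of_lt_of_le (mul_pos hκ hs.1) (hLlow s ⟨hs.1.le, hs.2⟩)
  have hLnn : ∀ s ∈ Set.Icc (0:ℝ) (T+h), 0 ≤ s0 + sm * s := by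
    intro s hs
    rcases eq_or_lt_of_le hs.1 with hfoo | hfoo
    · rw [← hfoo]; simpa using hs0
    · exact (hLposIoc s ⟨hfoo, hs.2⟩).le
  set M : ℝ := max s0 (s0 + sm * (T+h)) with hMdef
  have hMpos : 0 < M := lt_of_lt_of_le hLT (le_max_right _ _)
  have hLM : ∀ s ∈ Set.Icc (0:ℝ) (T+h), s0 + sm * s ≤ M := by
    intro s hs
    rcases le_total sm 0 with hsm | hsm
    · have : sm * s ≤ 0 := mul_nonpos_of_nonpos_of_nonneg hsm hs.1
      have := le_max_left s0 (s0 + sm * (T+h))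
      linarith
    · have : sm * s ≤ sm * (T+h) := mul_le_mul_of_nonneg_left hs.2 hsm
      have := le_max_right s0 (s0 + sm * (T+h))
      linarith
  have hsumf1 : ∀ s ∈ Set.Icc (0:ℝ) T, ∑ v, f1 s v = s0 + sm * s := by
    intro s hs
    rw [hsum1 s hs.1]
    exact max_eq_left (hLnn s ⟨hs.1, by linarith [hs.2]⟩)
  have hsumf2 : ∀ s ∈ Set.Icc (0:ℝ) (T+h), ∑ v, f2 s v = s0 + sm * s := by
    intro s hs
    rw [hsum2 s hs.1]
    exact max_eq_left (hLnn s hs)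
  have hub1 : ∀ s ∈ Set.Icc (0:ℝ) T, ∀ v, f1 s v ≤ s0 + sm * s := by
    intro s hs v
    rw [← hsumf1 s hs]
    exact cg_coord_le_sum (fun w => hpos1 s hs.1 w) v
  have hub2 : ∀ s ∈ Set.Icc (0:ℝ) (T+h), ∀ v, f2 s v ≤ s0 + sm * s := by
    intro s hs v
    rw [← hsumf2 s hs]
    exact cg_coord_le_sum (fun w => hpos2 s hs.1 w) v
  have hfne1 : ∀ s ∈ Set.Ioc (0:ℝ) T, f1 s ≠ 0 := by
    intro s hs heq
    have := hsumf1 s ⟨hs.1.le, hs.2⟩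
    rw [heq] at this
    simp only [Pi.zero_apply, Finset.sum_const_zero] at this
    exact absurd this.symm (ne_of_gt (hLposIoc s ⟨hs.1, by linarith [hs.2]⟩))
  have hfne2 : ∀ s ∈ Set.Icc (0:ℝ) T, f2 (s+h) ≠ 0 := by
    intro s hs heq
    have h1 := hsumf2 (s+h) ⟨by linarith [hs.1], by linarith [hs.2]⟩
    rw [heq] at h1
    simp only [Pi.zero_apply, Finset.sum_const_zero] at h1
    have := hσle s hs
    linarith
  -- lower bound for f2
  obtain ⟨ρ2, hρ2pos, hρ2⟩ := cg_lower_bound ha hlam hq0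
    ⟨hcont2, hinit2, hpos2, hsum2, hode2⟩ hTh hLT
  -- the difference, its positive part, and the squared deficiency
  set p : ℝ → V → ℝ := fun t v => max (f1 t v - f2 (t+h) v) 0 with hpdef
  set dd : ℝ → ℝ := fun t => ∑ v, p t v ^ 2 with hdddef
  have hp0 : ∀ t v, 0 ≤ p t v := fun t v => le_max_right _ _
  have hdd0 : ∀ t, 0 ≤ dd t := fun t => Finset.sum_nonneg (fun v _ => sq_nonneg _)
  -- derivative of dd
  have hdd_deriv : ∀ t ∈ Set.Ioo (0:ℝ) T, HasDerivAt dd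
      (∑ v, (2 * p t v) *
        (gdrift a lam (f1 t) v - gdrift a lam (f2 (t+h)) v)) t := by
    intro t ht
    have h1 : HasDerivAt f1 (gdrift a lam (f1 t)) t :=
      hode1 t ht.1 (hfne1 t ⟨ht.1, ht.2.le⟩)
    have h2' : HasDerivAt f2 (gdrift a lam (f2 (t+h))) (t+h) :=
      hode2 (t+h) (by linarith [ht.1]) (hfne2 t ⟨ht.1.le, ht.2.le⟩)
    have h2 : HasDerivAt (fun s => f2 (s+h)) (gdrift a lam (f2 (t+h))) t :=
      HasDerivAt.comp_add_const t h h2'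
    apply HasDerivAt.fun_sum
    intro v _
    have hΔ : HasDerivAt (fun s => f1 s v - f2 (s+h) v)
        (gdrift a lam (f1 t) v - gdrift a lam (f2 (t+h)) v) t :=
      (cg_coord_deriv v h1).sub (cg_coord_deriv v h2)
    have hcomp := (hasDerivAt_reluSq (f1 t v - f2 (t+h) v)).comp t hΔ
    have : (fun y : ℝ => max y 0 * max y 0) ∘ (fun s => f1 s v - f2 (s+h) v)
        = fun s => p s v ^ 2 := by
      ext s
      simp [hpdef, Function.comp, sq]
    rw [this] at hcomp
    convert hcomp using 1
  -- Gronwall coefficients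
  obtain ⟨A1, B1, hA1, hB1, hK⟩ : ∃ A1 B1 : ℝ, 0 ≤ A1 ∧ 0 ≤ B1 ∧
      ∀ t ∈ Set.Ioo (0:ℝ) T,
        a * ((ρ2*(t+h)) ^ (a-1) + M ^ (a-1)) ≤ A1 * t ^ (a-1) + B1 := by
    rcases le_or_gt a 1 with ha1 | ha1
    · refine ⟨a * ρ2 ^ (a-1), a * M ^ (a-1), by positivity, by positivity, ?_⟩
      intro t ht
      have hth : 0 < t + h := by linarith [ht.1]
      have h1 : (ρ2*(t+h)) ^ (a-1) = ρ2 ^ (a-1) * (t+h) ^ (a-1) :=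
        Real.mul_rpow hρ2pos.le hth.le
      have h2 : (t+h) ^ (a-1) ≤ t ^ (a-1) :=
        Real.rpow_le_rpow_of_nonpos ht.1 (by linarith) (by linarith)
      rw [h1]
      have hρ2r : 0 ≤ ρ2 ^ (a-1) := Real.rpow_nonneg hρ2pos.le _
      nlinarith [mul_le_mul_of_nonneg_left h2 (mul_nonneg ha.le hρ2r)]
    · refine ⟨0, a * ((ρ2*(T+h)) ^ (a-1) + M ^ (a-1)), le_rfl, ?_, ?_⟩
      · have := Real.rpow_nonneg (mul_nonneg hρ2pos.le hTh.le) (a-1)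
        have := Real.rpow_nonneg hMpos.le (a-1)
        positivity
      · intro t ht
        have hth : 0 < t + h := by linarith [ht.1]
        have h2 : (ρ2*(t+h)) ^ (a-1) ≤ (ρ2*(T+h)) ^ (a-1) := by
          apply Real.rpow_le_rpow (by positivity) _ (by linarith)
          nlinarith [ht.2]
        rw [zero_mul, zero_add]
        nlinarith
  set c0 : ℝ := 2 * n * n ^ a / (σ/n) ^ a with hc0def
  have hσn : (0:ℝ) < (σ/n) ^ a := Real.rpow_pos_of_pos (div_pos hσ hn) a
  have hc0pos : 0 < c0 := by
    have : (0:ℝ) < n ^ a := Real.rpow_pos_of_pos hn a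
    positivity
  -- the key differential inequality
  have hDle : ∀ t ∈ Set.Ioo (0:ℝ) T,
      (∑ v, (2 * p t v) * (gdrift a lam (f1 t) v - gdrift a lam (f2 (t+h)) v))
        ≤ (c0 * A1 * t ^ (a-1) + c0 * B1) * dd t := by
    intro t ht
    have htmem : t ∈ Set.Icc (0:ℝ) T := ⟨ht.1.le, ht.2.le⟩
    have hth : 0 < t + h := by linarith [ht.1]
    have hthmem : t + h ∈ Set.Icc (0:ℝ) (T+h) := ⟨hth.le, by linarith [ht.2]⟩
    have hLt : 0 < s0 + sm * t := hLposIoc t ⟨ht.1, by linarith [ht.2]⟩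
    set u : V → ℝ := f1 t with hudef
    set w : V → ℝ := f2 (t+h) with hwdef
    set Su : ℝ := ∑ x, u x ^ a with hSudef
    set Sw : ℝ := ∑ x, w x ^ a with hSwdef
    have hu0 : ∀ x, 0 ≤ u x := fun x => hpos1 t ht.1.le x
    have huU : ∀ x, u x ≤ s0 + sm * t := fun x => hub1 t htmem x
    have huM : ∀ x, u x ≤ M := fun x => le_trans (huU x)
      (hLM t ⟨ht.1.le, by linarith [ht.2]⟩)
    have hwlow : ∀ x, ρ2 * (t+h) ≤ w x := fun x => hρ2 (t+h) hthmem x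
    have hwM : ∀ x, w x ≤ M := fun x => le_trans (hub2 (t+h) hthmem x) (hLM (t+h) hthmem)
    have hSulow : ((s0 + sm * t)/n) ^ a ≤ Su :=
      cg_S_lower ha hu0 (hsumf1 t htmem)
    have hSupos : 0 < Su :=
      lt_of_lt_of_le (Real.rpow_pos_of_pos (div_pos hLt hn) a) hSulow
    have hSwlow : (σ/n) ^ a ≤ Sw := by
      refine le_trans ?_ (cg_S_lower ha (fun x => hpos2 (t+h) hth.le x) (hsumf2 (t+h) hthmem))
      apply Real.rpow_le_rpow (by positivity) _ ha.le
      have := hσle t htmem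
      gcongr
    have hSwpos : 0 < Sw := lt_of_lt_of_le hσn hSwlow
    have hna : (0:ℝ) < n ^ a := Real.rpow_pos_of_pos hn a
    set K : ℝ := a * ((ρ2*(t+h)) ^ (a-1) + M ^ (a-1)) with hKdef
    have hKnn : 0 ≤ K := by
      have := Real.rpow_nonneg (mul_nonneg hρ2pos.le hth.le) (a-1)
      have := Real.rpow_nonneg hMpos.le (a-1)
      positivity
    set E : ℝ := ∑ x, p t x with hEdef
    have hE0 : 0 ≤ E := Finset.sum_nonneg (fun x _ => hp0 t x)
    have step1 : ∀ x, u x ^ a - w x ^ a ≤ K * p t x := by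
      intro x
      rcases le_or_gt (u x) (w x) with hc | hc
      · have h1 : u x ^ a ≤ w x ^ a := Real.rpow_le_rpow (hu0 x) hc ha.le
        have h2 : 0 ≤ K * p t x := mul_nonneg hKnn (hp0 t x)
        linarith
      · have hm : 0 < ρ2 * (t+h) := mul_pos hρ2pos hth
        have hux : u x ∈ Set.Icc (ρ2*(t+h)) M := ⟨le_trans (hwlow x) hc.le, huM x⟩
        have hwx : w x ∈ Set.Icc (ρ2*(t+h)) M := ⟨hwlow x, hwM x⟩
        have hlip := cg_rpow_lip ha hm hwx hux
        have hpx : p t x = u x - w x := by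
          rw [hpdef]
          exact max_eq_left (by simp [hudef, hwdef]; linarith)
        rw [hpx]
        calc u x ^ a - w x ^ a ≤ |u x ^ a - w x ^ a| := le_abs_self _
        _ ≤ K * |u x - w x| := hlip
        _ = K * (u x - w x) := by rw [abs_of_pos (by linarith)]
    have step2 : Su - Sw ≤ K * E := by
      have : Su - Sw = ∑ x, (u x ^ a - w x ^ a) := by
        rw [Finset.sum_sub_distrib]
      rw [this, hEdef, Finset.mul_sum]
      exact Finset.sum_le_sum (fun x _ => step1 x)
    have step3 : ∀ v, (2 * p t v) * (gdrift a lam u v - gdrift a lam w v)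
        ≤ (2 * p t v) * (n ^ a * (K * E) / Sw) := by
      intro v
      rcases eq_or_lt_of_le (hp0 t v) with hpv | hpv
      · rw [← hpv]
        simp
      · apply mul_le_mul_of_nonneg_left _ (by linarith)
        have hcv : w v < u v := by
          by_contra hcc
          push_neg at hcc
          have : p t v = 0 := by
            rw [hpdef]
            exact max_eq_right (by simp [hudef, hwdef]; linarith)
          rw [this] at hpv
          exact lt_irrefl _ hpv
        have hsplit : gdrift a lam u v - gdrift a lam w v
            = (w v ^ a - u v ^ a)/Sw + u v ^ a * (Su - Sw)/(Su*Sw) := by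
          simp only [gdrift, ← hSudef, ← hSwdef]
          field_simp
          ring
        rw [hsplit]
        have hterm1 : (w v ^ a - u v ^ a)/Sw ≤ 0 := by
          apply div_nonpos_of_nonpos_of_nonneg _ hSwpos.le
          have := Real.rpow_le_rpow (hpos2 (t+h) hth.le v) hcv.le ha.le
          linarith
        have huan : u v ^ a ≤ n ^ a * Su := by
          have k1 : u v ^ a ≤ (s0 + sm*t) ^ a :=
            Real.rpow_le_rpow (hu0 v) (huU v) ha.le
          have k2 : (s0 + sm*t) ^ a = n ^ a * ((s0+sm*t)/n) ^ a := by
            rw [← Real.mul_rpow hn.le (by positivity)]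
            rw [mul_div_cancel₀ _ hn.ne']
          have k3 : n ^ a * ((s0+sm*t)/n) ^ a ≤ n ^ a * Su :=
            mul_le_mul_of_nonneg_left hSulow (Real.rpow_nonneg hn.le a)
          linarith
        have hterm2 : u v ^ a * (Su - Sw)/(Su*Sw) ≤ n ^ a * (K * E) / Sw := by
          have k1 : u v ^ a * (Su - Sw) ≤ u v ^ a * (K * E) :=
            mul_le_mul_of_nonneg_left step2 (Real.rpow_nonneg (hu0 v) a)
          have k2 : u v ^ a * (K * E) ≤ (n ^ a * Su) * (K * E) :=
            mul_le_mul_of_nonneg_right huan (mul_nonneg hKnn hE0)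
          have k3 : u v ^ a * (Su - Sw)/(Su*Sw) ≤ (n ^ a * Su) * (K * E)/(Su*Sw) :=
            (div_le_div_iff_of_pos_right (mul_pos hSupos hSwpos)).2 (k1.trans k2)
          have k4 : (n ^ a * Su) * (K * E)/(Su*Sw) = n ^ a * (K * E)/Sw := by
            field_simp
          linarith
        linarith
    have step4 : (∑ v, (2 * p t v) * (gdrift a lam u v - gdrift a lam w v))
        ≤ 2 * (n ^ a * (K * E) / Sw) * E := by
      calc (∑ v, (2 * p t v) * (gdrift a lam u v - gdrift a lam w v))
          ≤ ∑ v, (2 * p t v) * (n ^ a * (K * E) / Sw) :=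
            Finset.sum_le_sum (fun v _ => step3 v)
      _ = 2 * (n ^ a * (K * E) / Sw) * E := by
            rw [← Finset.sum_mul, ← Finset.mul_sum, ← hEdef]
            ring
    have hEsq : E ^ 2 ≤ n * dd t := by
      rw [hEdef, hdddef, hndef]
      have := sq_sum_le_card_mul_sum_sq (s := (Finset.univ : Finset V)) (f := p t)
      simpa using this
    have step5 : 2 * (n ^ a * (K * E) / Sw) * E ≤ 2 * n ^ a * K * (n * dd t) / Sw := by
      have : 2 * (n ^ a * (K * E) / Sw) * E = 2 * n ^ a * K * E ^ 2 / Sw := by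
        field_simp
      rw [this]
      exact (div_le_div_iff_of_pos_right hSwpos).2
        (mul_le_mul_of_nonneg_left hEsq (by
          apply mul_nonneg (mul_nonneg (by norm_num) hna.le) hKnn))
    have step6 : 2 * n ^ a * K * (n * dd t) / Sw ≤ (c0 * A1 * t ^ (a-1) + c0 * B1) * dd t := by
      have l1 : 2 * n ^ a * K * (n * dd t) / Sw ≤ 2 * n ^ a * K * (n * dd t) / ((σ/n) ^ a) := by
        rw [div_eq_mul_inv, div_eq_mul_inv]
        apply mul_le_mul_of_nonneg_left (inv_anti₀ hσn hSwlow)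
        apply mul_nonneg (mul_nonneg (mul_nonneg (by norm_num) hna.le) hKnn)
        exact mul_nonneg hn.le (hdd0 t)
      have l2 : 2 * n ^ a * K * (n * dd t) / ((σ/n) ^ a) = c0 * K * dd t := by
        rw [hc0def]
        field_simp
      have l3 : c0 * K * dd t ≤ c0 * (A1 * t ^ (a-1) + B1) * dd t := by
        apply mul_le_mul_of_nonneg_right _ (hdd0 t)
        exact mul_le_mul_of_nonneg_left (hK t ht) hc0pos.le
      have l4 : c0 * (A1 * t ^ (a-1) + B1) * dd t = (c0 * A1 * t ^ (a-1) + c0 * B1) * dd t := by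
        ring
      linarith
    calc (∑ v, (2 * p t v) * (gdrift a lam (f1 t) v - gdrift a lam (f2 (t+h)) v))
        ≤ 2 * (n ^ a * (K * E) / Sw) * E := step4
    _ ≤ 2 * n ^ a * K * (n * dd t) / Sw := step5
    _ ≤ (c0 * A1 * t ^ (a-1) + c0 * B1) * dd t := step6
  -- Gronwall: `dd * exp (-Φ)` is antitone on `[0,T]`
  set Φ : ℝ → ℝ := fun s => c0 * A1 * s ^ a / a + c0 * B1 * s with hΦdef
  have hΦder : ∀ t ∈ Set.Ioo (0:ℝ) T, HasDerivAt Φ (c0 * A1 * t ^ (a-1) + c0 * B1) t := by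
    intro t ht
    have h1 : HasDerivAt (fun s : ℝ => s ^ a) (a * t ^ (a-1)) t :=
      Real.hasDerivAt_rpow_const (Or.inl ht.1.ne')
    have h2 := ((h1.const_mul (c0 * A1)).div_const a).add
      ((hasDerivAt_id t).const_mul (c0 * B1))
    have h3 : c0 * A1 * (a * t ^ (a-1)) / a + c0 * B1 * 1 = c0 * A1 * t ^ (a-1) + c0 * B1 := by
      field_simp
    rw [h3] at h2
    exact h2
  set ψ : ℝ → ℝ := fun s => dd s * Real.exp (-(Φ s)) with hψdef
  have hpcont : ∀ v, ContinuousOn (fun s => p s v) (Set.Icc (0:ℝ) T) := by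
    intro v
    apply ContinuousOn.sup _ continuousOn_const
    apply ContinuousOn.sub
    · exact ((continuous_apply v).comp_continuousOn hcont1).mono
        (fun s hs => hs.1)
    · have hshift : ContinuousOn (fun s : ℝ => f2 (s + h)) (Set.Icc (0:ℝ) T) := by
        apply hcont2.comp ((continuous_id.add continuous_const).continuousOn)
        intro s hs
        exact add_nonneg hs.1 hh
      exact (continuous_apply v).comp_continuousOn hshift
  have hddcont : ContinuousOn dd (Set.Icc (0:ℝ) T) := by
    apply continuousOn_finset_sum
    intro v _
    exact (hpcont v).pow 2
  have hψcont : ContinuousOn ψ (Set.Icc (0:ℝ) T) := by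
    apply hddcont.mul
    apply Real.continuous_exp.comp_continuousOn
    apply ContinuousOn.neg
    apply ContinuousOn.add
    · exact (continuousOn_const.mul
        (continuousOn_id.rpow_const (fun x _ => Or.inr ha.le))).div_const a
    · exact continuousOn_const.mul continuousOn_id
  have hanti : AntitoneOn ψ (Set.Icc (0:ℝ) T) := by
    apply antitoneOn_of_deriv_nonpos (convex_Icc 0 T) hψcont
    · rw [interior_Icc]
      intro t ht
      exact ((hdd_deriv t ht).mul ((hΦder t ht).neg.exp)).differentiableAt.differentiableWithinAt
    · rw [interior_Icc]
      intro t ht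
      have hder := (hdd_deriv t ht).fun_mul ((hΦder t ht).fun_neg.exp)
      rw [hder.deriv]
      have hexp : 0 < Real.exp (-(Φ t)) := Real.exp_pos _
      have hle := hDle t ht
      nlinarith [hle, hexp, hdd0 t]
  intro t ht v
  have hψt : ψ t ≤ ψ 0 := hanti ⟨le_rfl, hT.le⟩ ht ht.1
  have hdd00 : dd 0 = 0 := by
    rw [hdddef]
    apply Finset.sum_eq_zero
    intro v _
    have : p 0 v = 0 := by
      rw [hpdef]
      apply max_eq_right
      have := hinit v
      rw [hinit1]
      simp only [zero_add]
      linarith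
    rw [this]
    simp
  have hψ0 : ψ 0 = 0 := by rw [hψdef]; simp [hdd00]
  rw [hψ0] at hψt
  have hexp : 0 < Real.exp (-(Φ t)) := Real.exp_pos _
  have hddt : dd t ≤ 0 := by
    by_contra hc
    push_neg at hc
    have : 0 < ψ t := mul_pos hc hexp
    linarith
  have hddt0 : dd t = 0 := le_antisymm hddt (hdd0 t)
  have hptv : p t v = 0 := by
    have := Finset.sum_eq_zero_iff_of_nonneg
      (fun x (_ : x ∈ Finset.univ) => sq_nonneg (p t x))
    rw [hdddef] at hddt0
    have h2 := (this.1 hddt0) v (Finset.mem_univ v)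
    exact pow_eq_zero_iff (by norm_num) |>.1 h2
  have : f1 t v - f2 (t+h) v ≤ 0 := by
    have h1 : f1 t v - f2 (t+h) v ≤ p t v := by rw [hpdef]; exact le_max_left _ _
    rw [hptv] at h1
    exact h1
  linarith

end CGcompare

/-- `τ⁰(f) = inf {t > 0 : min_v f_v(t) ≤ 0}`, with the convention `inf ∅ = +∞`
(realized by taking the infimum in the extended reals). -/
noncomputable def tau0 {V : Type*} (f : ℝ → V → ℝ) : EReal :=
  sInf ((fun t : ℝ => (t : EReal)) '' {t : ℝ | 0 < t ∧ ∃ v, f t v ≤ 0})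

set_option maxHeartbeats 1000000 in
/-- the complete-graph initial value problem has at most one solution:
two solutions with the same initial condition agree at every time `t ≥ 0`. -/
theorem cgSolution_unique {V : Type*} [Fintype V] [Nonempty V]
    (a : ℝ) (ha : 0 < a) (lam : V → ℝ) (hlam : ∀ v, 0 < lam v)
    (q0 : V → ℝ) (hq0 : ∀ v, 0 ≤ q0 v)
    (f₁ f₂ : ℝ → V → ℝ)
    (hf₁ : IsCGSolution a lam q0 f₁) (hf₂ : IsCGSolution a lam q0 f₂) :
    ∀ t, 0 ≤ t → f₁ t = f₂ t := by
  intro t ht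
  rcases eq_or_lt_of_le ht with h0 | htpos
  · rw [← h0, hf₁.2.1, hf₂.2.1]
  set s0 := ∑ v, q0 v with hs0def
  set sm := (∑ v, lam v) - 1 with hsmdef
  have hs0nn : 0 ≤ s0 := Finset.sum_nonneg (fun v _ => hq0 v)
  rcases le_or_gt (s0 + sm * t) 0 with hL | hL
  · -- total mass is zero at time t: both solutions vanish
    have hz : ∀ (g : ℝ → V → ℝ), IsCGSolution a lam q0 g → g t = 0 := by
      intro g hg
      funext v
      have hsumg := hg.2.2.2.1 t ht
      rw [max_eq_right hL] at hsumg
      exact (Finset.sum_eq_zero_iff_of_nonneg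
        (fun w _ => hg.2.2.1 t ht w)).1 hsumg v (Finset.mem_univ v)
    rw [hz f₁ hf₁, hz f₂ hf₂]
  · rcases eq_or_lt_of_le hs0nn with hs0 | hs0
    · -- zero initial condition; use time-shift comparison and let the shift tend to `0`
      have hq00 : ∀ v, q0 v = 0 := fun v =>
        (Finset.sum_eq_zero_iff_of_nonneg (fun w _ => hq0 w)).1 hs0.symm v (Finset.mem_univ v)
      have hsm : 0 < sm := by nlinarith
      have claim : ∀ (g1 g2 : ℝ → V → ℝ), IsCGSolution a lam q0 g1 →
          IsCGSolution a lam q0 g2 → ∀ h' : ℝ, 0 < h' → ∀ v, g1 t v ≤ g2 (t+h') v := by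
        intro g1 g2 hg1 hg2 h' hh' v
        refine cg_compare ha hlam hq0 hg1 hg2 hh'.le htpos
          (mul_pos hsm hh') ?_ ?_ ?_ t ⟨htpos.le, le_rfl⟩ v
        · rw [← hs0def, ← hsmdef, ← hs0]
          nlinarith
        · intro u hu
          rw [← hs0def, ← hsmdef, ← hs0]
          nlinarith [hu.1]
        · intro w
          rw [hq00 w]
          exact hg2.2.2.1 h' hh'.le w
      have hlimle : ∀ (g1 g2 : ℝ → V → ℝ), IsCGSolution a lam q0 g1 →
          IsCGSolution a lam q0 g2 → ∀ v, g1 t v ≤ g2 t v := by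
        intro g1 g2 hg1 hg2 v
        have hcw : ContinuousWithinAt (fun s => g2 s v) (Set.Ici 0) t :=
          ((continuous_apply v).comp_continuousOn hg2.1) t ht
        have hmap : Filter.Tendsto (fun h' : ℝ => t + h') (nhdsWithin 0 (Set.Ioi 0))
            (nhdsWithin t (Set.Ici 0)) := by
          rw [tendsto_nhdsWithin_iff]
          constructor
          · have : Filter.Tendsto (fun h' : ℝ => t + h') (nhds 0) (nhds (t+0)) :=
              (continuous_const.add continuous_id).tendsto 0
            rw [add_zero] at this
            exact this.mono_left nhdsWithin_le_nhds
          · filter_upwards [self_mem_nhdsWithin] with h' hh'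
            have : (0:ℝ) < h' := hh'
            simp only [Set.mem_Ici]
            linarith
        have hlim : Filter.Tendsto (fun h' : ℝ => g2 (t+h') v)
            (nhdsWithin 0 (Set.Ioi 0)) (nhds (g2 t v)) := hcw.tendsto.comp hmap
        apply ge_of_tendsto hlim
        filter_upwards [self_mem_nhdsWithin] with h' hh'
        exact claim g1 g2 hg1 hg2 h' hh' v
      funext v
      exact le_antisymm (hlimle f₁ f₂ hf₁ hf₂ v) (hlimle f₂ f₁ hf₂ hf₁ v)
    · -- positive initial mass: direct comparison with `h = 0`
      have hσpos : 0 < min s0 (s0 + sm*t) := lt_min hs0 hL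
      have hσle : ∀ u ∈ Set.Icc (0:ℝ) t, min s0 (s0+sm*t) ≤ s0 + sm * (u + 0) := by
        intro u hu
        rw [add_zero]
        rcases le_total sm 0 with hsm | hsm
        · have : sm * t ≤ sm * u := mul_le_mul_of_nonpos_left hu.2 hsm
          have := min_le_right s0 (s0 + sm*t)
          linarith
        · have : 0 ≤ sm * u := mul_nonneg hsm hu.1
          have := min_le_left s0 (s0 + sm*t)
          linarith
      have hcomp : ∀ (g1 g2 : ℝ → V → ℝ), IsCGSolution a lam q0 g1 →
          IsCGSolution a lam q0 g2 → ∀ v, g1 t v ≤ g2 (t+0) v := by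
        intro g1 g2 hg1 hg2 v
        refine cg_compare ha hlam hq0 hg1 hg2 le_rfl htpos hσpos ?_ hσle ?_ t
          ⟨htpos.le, le_rfl⟩ v
        · rw [← hs0def, ← hsmdef, add_zero]
          exact hL
        · intro w
          rw [hg2.2.1]
      funext v
      have h1 := hcomp f₁ f₂ hf₁ hf₂ v
      have h2 := hcomp f₂ f₁ hf₂ hf₁ v
      rw [add_zero] at h1 h2
      exact le_antisymm h1 h2
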